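/- Let W be an admissible double-well potential with wells a, b and fix ξ₀ ∈ [0,∞)³. Then the function φ(ξ) := g(ξ₀, ξ) is locally Lipschitz continuous on [0,∞)³, and for almost every ξ in the open positive orthant (0,∞)³ the function φ is differentiable at ξ with |∇φ(ξ)| = √(W(ξ)). -/

import Mathlib

open MeasureTheory Filter Set Topology

noncomputable section

abbrev E3 := EuclideanSpace ℝ (Fin 3)

/-- The nonnegative orthant `[0,∞)³`. -/
def Orthant : Set E3 := {u | ∀ i, 0 ≤ u i}

/-- `W` is an admissible double-well potential with wells `a, b ∈ [0,∞)³`. -/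
structure DoubleWell (a b : E3) (W : E3 → ℝ) : Prop where
  wells_ne : a ≠ b
  wellA_mem : a ∈ Orthant
  wellB_mem : b ∈ Orthant
  nonneg : ∀ u, 0 ≤ W u
  smooth : ContDiff ℝ 1 W
  symm : ∀ (u : E3) (i : Fin 3), W (WithLp.toLp 2 (Function.update u i (-(u i)))) = W u
  zeros : ∀ u ∈ Orthant, (W u = 0 ↔ u = a ∨ u = b)
  quadA : ∃ δ > (0 : ℝ), ∃ C > (0 : ℝ), ∀ u : E3, ‖u - a‖ < δ →
    C * ‖u - a‖ ^ 2 ≤ W u ∧ W u ≤ C⁻¹ * ‖u - a‖ ^ 2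
  quadB : ∃ δ > (0 : ℝ), ∃ C > (0 : ℝ), ∀ u : E3, ‖u - b‖ < δ →
    C * ‖u - b‖ ^ 2 ≤ W u ∧ W u ≤ C⁻¹ * ‖u - b‖ ^ 2
  growth : ∃ C' > (0 : ℝ), ∃ R > (0 : ℝ), ∀ u : E3, ‖u‖ > R → C' * ‖u‖ ^ 2 ≤ W u

/-- `γ` is an admissible Lipschitz curve from `ξ₀` to `ξ₁` inside the orthant. -/
def IsCurve (ξ₀ ξ₁ : E3) (γ : ℝ → E3) : Prop :=
  (∃ K, LipschitzWith K γ) ∧ (∀ t ∈ Set.Icc (0 : ℝ) 1, γ t ∈ Orthant) ∧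
    γ 0 = ξ₀ ∧ γ 1 = ξ₁

/-- The degenerate-length of a curve with respect to the conformal metric `W ds²`. -/
def curveEnergy (W : E3 → ℝ) (γ : ℝ → E3) : ℝ :=
  ∫ t in (0 : ℝ)..1, Real.sqrt (W (γ t)) * ‖deriv γ t‖

/-- The degenerate geodesic distance induced by `W` on the orthant. -/
def geoDist (W : E3 → ℝ) (ξ₀ ξ₁ : E3) : ℝ :=
  sInf (curveEnergy W '' {γ | IsCurve ξ₀ ξ₁ γ})



set_option maxHeartbeats 1000000

variable {F : Type*} [NormedAddCommGroup F] [NormedSpace ℝ F]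

lemma norm_deriv_le_of_lip {K : NNReal} {γ : ℝ → F} (h : LipschitzWith K γ) (t : ℝ) :
    ‖deriv γ t‖ ≤ K := by
  by_cases hd : DifferentiableAt ℝ γ t
  · exact hd.hasDerivAt.le_of_lipschitzOn univ_mem (lipschitzOnWith_univ.2 h)
  · simp [deriv_zero_of_not_differentiableAt hd]

lemma deriv_comp_mul (f : ℝ → F) (c t : ℝ) :
    deriv (fun s => f (c * s)) t = c • deriv f (c * t) := by
  rcases eq_or_ne c 0 with rfl | hc
  · simp
  by_cases hd : DifferentiableAt ℝ f (c * t)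
  · have h1 : HasDerivAt (fun s : ℝ => c * s) c t := by
      simpa using (hasDerivAt_id t).const_mul c
    have := (hd.hasDerivAt.scomp t h1)
    exact this.deriv
  · have hnd : ¬ DifferentiableAt ℝ (fun s => f (c * s)) t := by
      intro h
      apply hd
      have ht : t = c⁻¹ * (c * t) := by field_simp
      have h2 : DifferentiableAt ℝ ((fun s => f (c * s)) ∘ (fun x : ℝ => c⁻¹ * x)) (c * t) :=
        (ht ▸ h).comp _ (differentiableAt_id.const_mul c⁻¹)
      have h3 : ((fun s => f (c * s)) ∘ (fun x : ℝ => c⁻¹ * x)) = f := by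
        funext x; simp [Function.comp, mul_inv_cancel_left₀ hc]
      rwa [h3] at h2
    rw [deriv_zero_of_not_differentiableAt hnd, deriv_zero_of_not_differentiableAt hd, smul_zero]


lemma slope_tendsto_seq {f : ℝ → ℝ} {x f' : ℝ} (hf : HasDerivAt f f' x) :
    Tendsto (fun n : ℕ => (f (x + ((n : ℝ) + 1)⁻¹) - f x) * ((n : ℝ) + 1)) atTop (𝓝 f') := by
  have h0 : Tendsto (fun n : ℕ => ((n : ℝ) + 1)⁻¹) atTop (𝓝 0) := by
    simpa [one_div] using tendsto_one_div_add_atTop_nhds_zero_nat (𝕜 := ℝ)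
  have h1 : Tendsto (fun n : ℕ => x + ((n : ℝ) + 1)⁻¹) atTop (𝓝[≠] x) := by
    apply tendsto_nhdsWithin_of_tendsto_nhds_of_eventually_within
    · simpa using (tendsto_const_nhds.add h0)
    · filter_upwards with n
      have : ((n : ℝ) + 1)⁻¹ > 0 := by positivity
      simp only [mem_compl_iff, mem_singleton_iff]
      intro h
      nlinarith [add_left_cancel (a := x) (b := ((n:ℝ)+1)⁻¹) (c := 0)]
  have h2 := (hasDerivAt_iff_tendsto_slope.1 hf).comp h1
  convert h2 using 2 with n
  simp only [Function.comp_apply, slope_def_field]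
  rw [add_sub_cancel_left, div_inv_eq_mul]

lemma intervalIntegrable_of_bdd {f : ℝ → ℝ} {M : ℝ} (hm : AEStronglyMeasurable f volume)
    (hb : ∀ t, |f t| ≤ M) (c d : ℝ) : IntervalIntegrable f volume c d := by
  rw [intervalIntegrable_iff]
  have hfin : IsFiniteMeasure (volume.restrict (Set.uIoc c d)) := by
    constructor
    rw [Measure.restrict_apply_univ]
    exact (measure_mono Set.uIoc_subset_uIcc).trans_lt isCompact_uIcc.measure_lt_top
  apply Integrable.mono' (integrable_const M) hm.restrict
  filter_upwards with t
  simpa [Real.norm_eq_abs] using hb t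

lemma lipschitz_ftc {f : ℝ → ℝ} {K : NNReal} (hf : LipschitzWith K f) {c d : ℝ} (hcd : c ≤ d) :
    f d - f c = ∫ t in c..d, deriv f t := by
  have hcont := hf.continuous
  set g : ℕ → ℝ → ℝ := fun n t => (f (t + ((n : ℝ) + 1)⁻¹) - f t) * ((n : ℝ) + 1) with hg
  have hF : ∀ x : ℝ, HasDerivAt (fun u => ∫ s in c..u, f s) (f x) x := fun x =>
    intervalIntegral.integral_hasDerivAt_right (hcont.intervalIntegrable _ _)
      (hcont.stronglyMeasurable.stronglyMeasurableAtFilter) hcont.continuousAt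
  have hlim1 : Tendsto (fun n => ∫ t in c..d, g n t) atTop (𝓝 (f d - f c)) := by
    have hdd := slope_tendsto_seq (hF d)
    have hcc := slope_tendsto_seq (hF c)
    apply (hdd.sub hcc).congr
    intro n
    set h : ℝ := ((n : ℝ) + 1)⁻¹ with hh
    have hint1 : IntervalIntegrable (fun t => f (t + h)) volume c d :=
      (hcont.comp (continuous_id.add continuous_const)).intervalIntegrable _ _
    have hint2 : IntervalIntegrable f volume c d := hcont.intervalIntegrable _ _
    have e1 : ∫ t in c..d, g n t = ((∫ t in c..d, f (t + h)) - ∫ t in c..d, f t) * ((n : ℝ) + 1) := by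
      rw [hg]
      simp only
      rw [intervalIntegral.integral_mul_const, intervalIntegral.integral_sub hint1 hint2]
    have e2 : (∫ t in c..d, f (t + h)) = ∫ s in (c+h)..(d+h), f s :=
      intervalIntegral.integral_comp_add_right f h
    have e3 : (∫ s in (c+h)..(d+h), f s) = (∫ s in c..(d+h), f s) - ∫ s in c..(c+h), f s :=
      (intervalIntegral.integral_interval_sub_left (hcont.intervalIntegrable _ _)
        (hcont.intervalIntegrable _ _)).symm
    rw [e1, e2, e3]
    have e4 : (∫ s in c..c, f s) = 0 := intervalIntegral.integral_same
    rw [e4] at *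
    ring
  have hlim2 : Tendsto (fun n => ∫ t in c..d, g n t) atTop (𝓝 (∫ t in c..d, deriv f t)) := by
    have hset : ∀ (u : ℝ → ℝ), (∫ t in c..d, u t) = ∫ t in Set.Ioc c d, u t :=
      fun u => intervalIntegral.integral_of_le hcd
    simp only [hset]
    have hfin : IsFiniteMeasure (volume.restrict (Set.Ioc c d)) := by
      constructor
      rw [Measure.restrict_apply_univ]
      simp [Real.volume_Ioc]
    apply tendsto_integral_of_dominated_convergence (fun _ => (K : ℝ))
    · intro n
      exact (((hcont.comp (continuous_id.add continuous_const)).sub hcont).mul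
        continuous_const).aestronglyMeasurable.restrict
    · exact integrable_const _
    · intro n
      filter_upwards with t
      have hpos : (0 : ℝ) < (n : ℝ) + 1 := by positivity
      have hdist : |f (t + ((n : ℝ) + 1)⁻¹) - f t| ≤ (K : ℝ) * ((n : ℝ) + 1)⁻¹ := by
        have := hf.dist_le_mul (t + ((n : ℝ) + 1)⁻¹) t
        rw [Real.dist_eq, Real.dist_eq] at this
        have h2 : |(((n : ℝ) + 1)⁻¹)| = ((n : ℝ) + 1)⁻¹ := abs_of_pos (by positivity)
        simpa [h2] using this
      rw [hg]
      simp only [Real.norm_eq_abs, abs_mul, abs_of_pos hpos]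
      calc |f (t + ((n : ℝ) + 1)⁻¹) - f t| * ((n : ℝ) + 1)
          ≤ ((K : ℝ) * ((n : ℝ) + 1)⁻¹) * ((n : ℝ) + 1) := by
            apply mul_le_mul_of_nonneg_right hdist hpos.le
        _ = (K : ℝ) := by field_simp
    · filter_upwards [ae_restrict_of_ae (hf.ae_differentiableAt (μ := volume))] with t ht
      exact slope_tendsto_seq ht.hasDerivAt
  exact tendsto_nhds_unique hlim1 hlim2

local notation "⟪" x ", " y "⟫" => @inner ℝ _ _ x y

lemma chord_le {K : NNReal} {γ : ℝ → EuclideanSpace ℝ (Fin 3)} (h : LipschitzWith K γ)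
    {c d : ℝ} (hcd : c ≤ d) :
    ‖γ d - γ c‖ ≤ ∫ t in c..d, ‖deriv γ t‖ := by
  by_cases heq : γ d = γ c
  · rw [heq, sub_self, norm_zero]
    exact intervalIntegral.integral_nonneg hcd (fun t _ => norm_nonneg _)
  set w := γ d - γ c with hwdef
  have hw : w ≠ 0 := sub_ne_zero.2 heq
  set v := ‖w‖⁻¹ • w with hvdef
  have hv : ‖v‖ = 1 := norm_smul_inv_norm hw
  set f : ℝ → ℝ := fun t => ⟪v, γ t⟫ with hfdef
  have hfL : LipschitzWith K f := by
    apply LipschitzWith.of_dist_le_mul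
    intro s t
    rw [Real.dist_eq]
    have e : f s - f t = ⟪v, γ s - γ t⟫ := by rw [hfdef]; simp [inner_sub_right]
    rw [e]
    calc |⟪v, γ s - γ t⟫| ≤ ‖v‖ * ‖γ s - γ t‖ := abs_real_inner_le_norm _ _
      _ = dist (γ s) (γ t) := by rw [hv, one_mul, dist_eq_norm]
      _ ≤ K * dist s t := h.dist_le_mul s t
  have h1 : f d - f c = ‖w‖ := by
    have e : f d - f c = ⟪v, w⟫ := by rw [hfdef]; simp [hwdef, inner_sub_right]
    rw [e, hvdef, real_inner_smul_left, real_inner_self_eq_norm_sq]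
    have : ‖w‖ ≠ 0 := norm_ne_zero_iff.2 hw
    field_simp
  have int1 : IntervalIntegrable (fun t => deriv f t) volume c d :=
    intervalIntegrable_of_bdd (measurable_deriv f).aestronglyMeasurable
      (fun t => by simpa [Real.norm_eq_abs] using norm_deriv_le_of_lip hfL t) c d
  have int2 : IntervalIntegrable (fun t => ‖deriv γ t‖) volume c d :=
    intervalIntegrable_of_bdd (measurable_deriv γ).norm.aestronglyMeasurable
      (fun t => by simpa [abs_of_nonneg (norm_nonneg (deriv γ t))] using norm_deriv_le_of_lip h t) c d
  have h3 : (∫ t in c..d, deriv f t) ≤ ∫ t in c..d, ‖deriv γ t‖ := by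
    apply intervalIntegral.integral_mono_ae hcd int1 int2
    filter_upwards [h.ae_differentiableAt (μ := volume)] with t ht
    have hg : HasDerivAt f ⟪v, deriv γ t⟫ t := by
      have := (hasDerivAt_const t v).inner ℝ ht.hasDerivAt
      simpa using this
    rw [hg.deriv]
    calc ⟪v, deriv γ t⟫ ≤ ‖v‖ * ‖deriv γ t‖ := real_inner_le_norm _ _
      _ = ‖deriv γ t‖ := by rw [hv, one_mul]
  calc ‖γ d - γ c‖ = f d - f c := h1.symm
    _ = ∫ t in c..d, deriv f t := lipschitz_ftc hfL hcd
    _ ≤ ∫ t in c..d, ‖deriv γ t‖ := h3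


section Aux
variable {W : E3 → ℝ}

lemma orthant_convex : Convex ℝ Orthant := by
  intro x hx y hy s t hs ht hst
  intro i
  have := hx i; have := hy i
  simp only [PiLp.add_apply, PiLp.smul_apply, smul_eq_mul]
  positivity

lemma energy_integrand_integrable (hWc : Continuous W) {K : NNReal} {γ : ℝ → E3}
    (h : LipschitzWith K γ) (c d : ℝ) :
    IntervalIntegrable (fun t => Real.sqrt (W (γ t)) * ‖deriv γ t‖) volume c d := by
  obtain ⟨M, hM⟩ : ∃ M, ∀ x ∈ Set.uIcc c d, ‖Real.sqrt (W (γ x))‖ ≤ M :=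
    isCompact_uIcc.exists_bound_of_continuousOn
      ((Real.continuous_sqrt.comp (hWc.comp h.continuous)).continuousOn)
  rw [intervalIntegrable_iff]
  have hmeas : AEStronglyMeasurable (fun t => Real.sqrt (W (γ t)) * ‖deriv γ t‖)
      (volume.restrict (Set.uIoc c d)) := by
    exact ((Real.continuous_sqrt.comp (hWc.comp h.continuous)).aestronglyMeasurable).mul
      ((measurable_deriv γ).norm.aestronglyMeasurable)
  have hfin : IsFiniteMeasure (volume.restrict (Set.uIoc c d)) := by
    constructor
    rw [Measure.restrict_apply_univ]
    exact (measure_mono Set.uIoc_subset_uIcc).trans_lt isCompact_uIcc.measure_lt_top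
  apply Integrable.mono' (integrable_const (M * K)) hmeas
  · filter_upwards [ae_restrict_mem measurableSet_uIoc] with t ht
    have h1 : ‖Real.sqrt (W (γ t))‖ ≤ M := hM t (Set.uIoc_subset_uIcc ht)
    have h2 : ‖deriv γ t‖ ≤ K := norm_deriv_le_of_lip h t
    calc ‖Real.sqrt (W (γ t)) * ‖deriv γ t‖‖
        = ‖Real.sqrt (W (γ t))‖ * ‖deriv γ t‖ := by
          rw [norm_mul, norm_norm]
      _ ≤ M * K := by
          apply mul_le_mul h1 h2 (norm_nonneg _) ((norm_nonneg _).trans h1)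

lemma curveEnergy_nonneg (hW0 : ∀ u, 0 ≤ W u) (γ : ℝ → E3) : 0 ≤ curveEnergy W γ := by
  apply intervalIntegral.integral_nonneg zero_le_one
  intro t _
  exact mul_nonneg (Real.sqrt_nonneg _) (norm_nonneg _)

lemma lipschitz_segment (x v : E3) : LipschitzWith ‖v‖₊ (fun t : ℝ => x + t • v) := by
  apply LipschitzWith.of_dist_le_mul
  intro s t
  rw [dist_eq_norm, dist_eq_norm]
  have h1 : x + s • v - (x + t • v) = (s - t) • v := by module
  rw [h1, norm_smul, coe_nnnorm, mul_comm]

lemma segment_isCurve {ξ₀ ξ₁ : E3} (h₀ : ξ₀ ∈ Orthant) (h₁ : ξ₁ ∈ Orthant) :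
    IsCurve ξ₀ ξ₁ (fun t : ℝ => ξ₀ + t • (ξ₁ - ξ₀)) := by
  refine ⟨⟨_, lipschitz_segment ξ₀ (ξ₁ - ξ₀)⟩, ?_, by simp, by simp⟩
  intro t ht
  show ξ₀ + t • (ξ₁ - ξ₀) ∈ Orthant
  have h1 : ξ₀ + t • (ξ₁ - ξ₀) = (1 - t) • ξ₀ + t • ξ₁ := by module
  rw [h1]
  exact orthant_convex h₀ h₁ (by linarith [ht.2]) ht.1 (by ring)

lemma curves_nonempty {ξ₀ ξ₁ : E3} (h₀ : ξ₀ ∈ Orthant) (h₁ : ξ₁ ∈ Orthant) :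
    (curveEnergy W '' {γ | IsCurve ξ₀ ξ₁ γ}).Nonempty :=
  ⟨_, ⟨_, segment_isCurve h₀ h₁, rfl⟩⟩

lemma energy_bddBelow (hW0 : ∀ u, 0 ≤ W u) (ξ₀ ξ₁ : E3) :
    BddBelow (curveEnergy W '' {γ | IsCurve ξ₀ ξ₁ γ}) := by
  refine ⟨0, ?_⟩
  rintro x ⟨γ, -, rfl⟩
  exact curveEnergy_nonneg hW0 γ

lemma geoDist_nonneg (hW0 : ∀ u, 0 ≤ W u) {ξ₀ ξ₁ : E3} (h₀ : ξ₀ ∈ Orthant) (h₁ : ξ₁ ∈ Orthant) :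
    0 ≤ geoDist W ξ₀ ξ₁ :=
  le_csInf (curves_nonempty h₀ h₁) (by rintro x ⟨γ, -, rfl⟩; exact curveEnergy_nonneg hW0 γ)

lemma geoDist_le_energy (hW0 : ∀ u, 0 ≤ W u) {ξ₀ ξ₁ : E3} {γ : ℝ → E3} (h : IsCurve ξ₀ ξ₁ γ) :
    geoDist W ξ₀ ξ₁ ≤ curveEnergy W γ :=
  csInf_le (energy_bddBelow hW0 ξ₀ ξ₁) ⟨γ, h, rfl⟩

lemma exists_curve_lt (hW0 : ∀ u, 0 ≤ W u) {ξ₀ ξ₁ : E3} (h₀ : ξ₀ ∈ Orthant) (h₁ : ξ₁ ∈ Orthant)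
    {c : ℝ} (hc : geoDist W ξ₀ ξ₁ < c) :
    ∃ γ, IsCurve ξ₀ ξ₁ γ ∧ curveEnergy W γ < c := by
  obtain ⟨x, ⟨γ, hγ, rfl⟩, hx⟩ := exists_lt_of_csInf_lt (curves_nonempty h₀ h₁) hc
  exact ⟨γ, hγ, hx⟩

end Aux

section Glue
variable {W : E3 → ℝ}

lemma lipschitz_glue {f g : ℝ → E3} {c : ℝ} {C : NNReal} (hf : LipschitzWith C f)
    (hg : LipschitzWith C g) (hfg : f c = g c) :
    LipschitzWith C (fun t => if t ≤ c then f t else g t) := by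
  apply LipschitzWith.of_dist_le_mul
  have key : ∀ s t : ℝ, s ≤ t → dist (if s ≤ c then f s else g s) (if t ≤ c then f t else g t)
      ≤ C * dist s t := by
    intro s t hst
    by_cases hs : s ≤ c <;> by_cases ht : t ≤ c
    · simpa [hs, ht] using hf.dist_le_mul s t
    · simp only [hs, ht, if_true, if_false]
      push_neg at ht
      calc dist (f s) (g t) ≤ dist (f s) (f c) + dist (f c) (g t) := dist_triangle _ _ _
        _ = dist (f s) (f c) + dist (g c) (g t) := by rw [hfg]
        _ ≤ C * dist s c + C * dist c t :=
            add_le_add (hf.dist_le_mul _ _) (hg.dist_le_mul _ _)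
        _ = C * (dist s c + dist c t) := by ring
        _ = C * dist s t := by
            rw [Real.dist_eq, Real.dist_eq, Real.dist_eq,
              abs_of_nonpos (by linarith), abs_of_nonpos (by linarith),
              abs_of_nonpos (by linarith)]
            ring
    · exact absurd (hst.trans ht) hs
    · simpa [hs, ht] using hg.dist_le_mul s t
  intro s t
  rcases le_total s t with hle | hle
  · exact key s t hle
  · rw [dist_comm, dist_comm (s : ℝ) t]
    exact key t s hle

lemma lipschitz_mul_const (c : ℝ) : LipschitzWith ‖c‖₊ (fun t : ℝ => c * t) := by
  apply LipschitzWith.of_dist_le_mul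
  intro s t
  rw [Real.dist_eq, Real.dist_eq, ← mul_sub, abs_mul, coe_nnnorm, Real.norm_eq_abs]

/-- Key upper bound: concatenating a near-optimal curve to `η` with the straight segment
from `η` to `ξ`. -/
lemma geoDist_le_segment_bound (hWc : Continuous W) (hW0 : ∀ u, 0 ≤ W u)
    {ξ₀ η ξ : E3} (h₀ : ξ₀ ∈ Orthant) (hη : η ∈ Orthant) (hξ : ξ ∈ Orthant)
    {M : ℝ} (hM : ∀ u ∈ segment ℝ η ξ, Real.sqrt (W u) ≤ M) :
    geoDist W ξ₀ ξ ≤ geoDist W ξ₀ η + M * ‖ξ - η‖ := by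
  have hM0 : 0 ≤ M := (Real.sqrt_nonneg _).trans (hM η (left_mem_segment ℝ η ξ))
  refine le_of_forall_pos_le_add fun ε hε => ?_
  obtain ⟨γ, hγ, hγE⟩ := exists_curve_lt hW0 h₀ hη (lt_add_of_pos_right _ hε)
  obtain ⟨⟨K, hK⟩, horth, hγ0, hγ1⟩ := hγ
  -- the two pieces
  set f : ℝ → E3 := fun t => γ (2 * t) with hfdef
  set g : ℝ → E3 := fun t => η + (2 * t - 1) • (ξ - η) with hgdef
  set C : NNReal := (K * 2) ⊔ (‖ξ - η‖₊ * 2) with hCdef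
  have htwo : ‖(2:ℝ)‖₊ = 2 := by
    ext; simp [Real.norm_eq_abs]
  have hfL : LipschitzWith C f := by
    have h1 : LipschitzWith (K * ‖(2:ℝ)‖₊) f := hK.comp (lipschitz_mul_const 2)
    apply h1.weaken
    rw [htwo]
    exact le_sup_left
  have hgL : LipschitzWith C g := by
    have h2 : LipschitzWith (‖ξ - η‖₊ * 2) g := by
      apply LipschitzWith.of_dist_le_mul
      intro s t
      rw [dist_eq_norm, Real.dist_eq]
      have e : g s - g t = (2*s - 2*t) • (ξ - η) := by
        simp only [hgdef]
        module
      rw [e, norm_smul]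
      have e2 : |2*s - 2*t| = 2 * |s - t| := by
        rw [show 2*s - 2*t = 2*(s-t) by ring, abs_mul]
        norm_num
      have e3 : ((‖ξ - η‖₊ * 2 : NNReal) : ℝ) = ‖ξ - η‖ * 2 := by
        push_cast [coe_nnnorm]
        ring
      rw [e3, Real.norm_eq_abs, e2]
      exact le_of_eq (by ring)
    exact h2.weaken (le_sup_right)
  set γ₂ : ℝ → E3 := fun t => if t ≤ 1/2 then f t else g t with hγ₂def
  have hmatch : f (1/2 : ℝ) = g (1/2 : ℝ) := by
    rw [hfdef, hgdef]
    norm_num [hγ1]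
  have hγ₂L : LipschitzWith C γ₂ := lipschitz_glue hfL hgL hmatch
  have hγ₂val : ∀ t : ℝ, t < 1/2 → γ₂ t = γ (2*t) := by
    intro t ht
    show (if t ≤ 1/2 then f t else g t) = γ (2*t)
    rw [if_pos ht.le]
  have hcurve : IsCurve ξ₀ ξ γ₂ := by
    refine ⟨⟨C, hγ₂L⟩, ?_, ?_, ?_⟩
    · intro t ht
      show (if t ≤ 1/2 then f t else g t) ∈ Orthant
      by_cases h : t ≤ 1/2
      · rw [if_pos h, hfdef]
        exact horth (2*t) ⟨by linarith [ht.1], by linarith⟩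
      · push_neg at h
        have e : g t = (2 - 2*t) • η + (2*t - 1) • ξ := by
          simp only [hgdef]; module
        rw [if_neg (not_le.2 h), e]
        exact orthant_convex hη hξ (by linarith [ht.2]) (by linarith) (by ring)
    · show (if (0:ℝ) ≤ 1/2 then f 0 else g 0) = ξ₀
      rw [if_pos (by norm_num), hfdef]
      simpa using hγ0
    · show (if (1:ℝ) ≤ 1/2 then f 1 else g 1) = ξ
      rw [if_neg (by norm_num), hgdef]
      norm_num
  have hint1 : IntervalIntegrable (fun t => Real.sqrt (W (γ₂ t)) * ‖deriv γ₂ t‖) volume 0 (1/2) :=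
    energy_integrand_integrable hWc hγ₂L 0 (1/2)
  have hint2 : IntervalIntegrable (fun t => Real.sqrt (W (γ₂ t)) * ‖deriv γ₂ t‖) volume (1/2) 1 :=
    energy_integrand_integrable hWc hγ₂L (1/2) 1
  have hsplit : curveEnergy W γ₂ = (∫ t in (0:ℝ)..(1/2), Real.sqrt (W (γ₂ t)) * ‖deriv γ₂ t‖)
      + (∫ t in (1/2:ℝ)..1, Real.sqrt (W (γ₂ t)) * ‖deriv γ₂ t‖) :=
    (intervalIntegral.integral_add_adjacent_intervals hint1 hint2).symm
  have hA : (∫ t in (0:ℝ)..(1/2), Real.sqrt (W (γ₂ t)) * ‖deriv γ₂ t‖) = curveEnergy W γ := by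
    have hne : ∀ᵐ t : ℝ, t ≠ (1/2:ℝ) := by
      have hset : {t : ℝ | ¬ t ≠ (1/2:ℝ)} = {(1/2:ℝ)} := by ext t; simp
      rw [ae_iff, hset]
      exact measure_singleton _
    have hcongr : ∀ᵐ t : ℝ, t ∈ Set.uIoc (0:ℝ) (1/2) →
        Real.sqrt (W (γ₂ t)) * ‖deriv γ₂ t‖
          = 2 * (Real.sqrt (W (γ (2*t))) * ‖deriv γ (2*t)‖) := by
      filter_upwards [hne] with t ht hmem
      rw [Set.uIoc_of_le (by norm_num : (0:ℝ) ≤ 1/2)] at hmem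
      have htlt : t < 1/2 := lt_of_le_of_ne hmem.2 ht
      have hev : γ₂ =ᶠ[𝓝 t] (fun s => γ (2*s)) := by
        filter_upwards [Iio_mem_nhds htlt] with s hs
        exact hγ₂val s hs
      have hdval : deriv γ₂ t = deriv (fun s => γ (2*s)) t := hev.deriv_eq
      rw [hγ₂val t htlt, hdval, deriv_comp_mul γ 2 t, norm_smul]
      simp only [Real.norm_eq_abs]
      rw [abs_of_pos (by norm_num : (0:ℝ) < 2)]
      ring
    rw [intervalIntegral.integral_congr_ae hcongr, intervalIntegral.integral_const_mul]
    have hcomp := intervalIntegral.smul_integral_comp_mul_left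
      (f := fun u => Real.sqrt (W (γ u)) * ‖deriv γ u‖) (a := (0:ℝ)) (b := 1/2) 2
    norm_num at hcomp
    rw [curveEnergy, ← hcomp]
    all_goals simp [smul_eq_mul]
  have hB : (∫ t in (1/2:ℝ)..1, Real.sqrt (W (γ₂ t)) * ‖deriv γ₂ t‖) ≤ M * ‖ξ - η‖ := by
    have hgderiv : ∀ t : ℝ, deriv g t = (2:ℝ) • (ξ - η) := by
      intro t
      have h1 : HasDerivAt (fun s : ℝ => 2 * s - 1) 2 t := by
        simpa using ((hasDerivAt_id t).const_mul 2).sub_const 1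
      have h2 : HasDerivAt g ((2:ℝ) • (ξ - η)) t := by
        simp only [hgdef]
        exact (h1.smul_const (ξ - η)).const_add η
      exact h2.deriv
    have hcongr : ∀ t ∈ Set.uIoc (1/2:ℝ) 1,
        Real.sqrt (W (γ₂ t)) * ‖deriv γ₂ t‖ = Real.sqrt (W (g t)) * (2 * ‖ξ - η‖) := by
      intro t hmem
      rw [Set.uIoc_of_le (by norm_num : (1/2:ℝ) ≤ 1)] at hmem
      have htgt : 1/2 < t := hmem.1
      have hev : γ₂ =ᶠ[𝓝 t] g := by
        filter_upwards [Ioi_mem_nhds htgt] with s hs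
        show (if s ≤ 1/2 then f s else g s) = g s
        rw [if_neg (not_le.2 hs)]
      have hval : γ₂ t = g t := by
        show (if t ≤ 1/2 then f t else g t) = g t
        rw [if_neg (not_le.2 htgt)]
      rw [hval, hev.deriv_eq, hgderiv t, norm_smul]
      simp only [Real.norm_eq_abs]
      rw [abs_of_pos (by norm_num : (0:ℝ) < 2)]
    rw [intervalIntegral.integral_congr_ae (MeasureTheory.ae_of_all _ hcongr)]
    have hseg : ∀ t ∈ Set.Icc (1/2:ℝ) 1, g t ∈ segment ℝ η ξ := by
      intro t ht
      rw [segment_eq_image' ℝ η ξ]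
      exact ⟨2*t - 1, ⟨by linarith [ht.1], by linarith [ht.2]⟩, rfl⟩
    have hmono : (∫ t in (1/2:ℝ)..1, Real.sqrt (W (g t)) * (2 * ‖ξ - η‖))
        ≤ ∫ _ in (1/2:ℝ)..1, M * (2 * ‖ξ - η‖) := by
      apply intervalIntegral.integral_mono_on (by norm_num)
      · exact (((Real.continuous_sqrt.comp (hWc.comp (by continuity : Continuous g))).mul
          continuous_const)).intervalIntegrable _ _
      · exact intervalIntegrable_const
      · intro t ht
        exact mul_le_mul_of_nonneg_right (hM _ (hseg t ht)) (by positivity)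
    calc (∫ t in (1/2:ℝ)..1, Real.sqrt (W (g t)) * (2 * ‖ξ - η‖))
        ≤ ∫ _ in (1/2:ℝ)..1, M * (2 * ‖ξ - η‖) := hmono
      _ = M * ‖ξ - η‖ := by
          rw [intervalIntegral.integral_const, smul_eq_mul]
          ring
  calc geoDist W ξ₀ ξ ≤ curveEnergy W γ₂ := geoDist_le_energy hW0 hcurve
    _ = curveEnergy W γ + (∫ t in (1/2:ℝ)..1, Real.sqrt (W (γ₂ t)) * ‖deriv γ₂ t‖) := by
        rw [hsplit, hA]
    _ ≤ (geoDist W ξ₀ η + ε) + M * ‖ξ - η‖ := add_le_add hγE.le hB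
    _ = geoDist W ξ₀ η + M * ‖ξ - η‖ + ε := by ring

end Glue

section Partial
variable {W : E3 → ℝ}

lemma geoDist_le_partial (hWc : Continuous W) (hW0 : ∀ u, 0 ≤ W u) {ξ₀ : E3} {γ : ℝ → E3}
    {K : NNReal} (hK : LipschitzWith K γ) (horth : ∀ t ∈ Set.Icc (0:ℝ) 1, γ t ∈ Orthant)
    (hγ0 : γ 0 = ξ₀) {c : ℝ} (hc : c ∈ Set.Icc (0:ℝ) 1) :
    geoDist W ξ₀ (γ c) ≤ ∫ t in (0:ℝ)..c, Real.sqrt (W (γ t)) * ‖deriv γ t‖ := by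
  by_cases hc0 : c = 0
  · subst hc0
    rw [intervalIntegral.integral_same]
    have hcurve : IsCurve ξ₀ (γ 0) (fun _ : ℝ => ξ₀) := by
      refine ⟨⟨0, LipschitzWith.const ξ₀⟩, ?_, rfl, hγ0.symm⟩
      intro t _
      rw [← hγ0]
      exact horth 0 ⟨le_refl 0, zero_le_one⟩
    have henergy : curveEnergy W (fun _ : ℝ => ξ₀) = 0 := by
      rw [curveEnergy]
      have : ∀ t : ℝ, Real.sqrt (W ((fun _ : ℝ => ξ₀) t)) * ‖deriv (fun _ : ℝ => ξ₀) t‖ = 0 := by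
        intro t
        rw [deriv_const]
        simp
      simp only [this, intervalIntegral.integral_zero]
    calc geoDist W ξ₀ (γ 0) ≤ curveEnergy W (fun _ : ℝ => ξ₀) := geoDist_le_energy hW0 hcurve
      _ = 0 := henergy
  · have hcpos : 0 < c := lt_of_le_of_ne hc.1 (Ne.symm hc0)
    set σ : ℝ → E3 := fun s => γ (c * s) with hσdef
    have hσL : LipschitzWith (K * ‖c‖₊) σ := hK.comp (lipschitz_mul_const c)
    have hcurve : IsCurve ξ₀ (γ c) σ := by
      refine ⟨⟨_, hσL⟩, ?_, ?_, ?_⟩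
      · intro s hs
        apply horth
        constructor
        · exact mul_nonneg hcpos.le hs.1
        · calc c * s ≤ c * 1 := by
                apply mul_le_mul_of_nonneg_left hs.2 hcpos.le
            _ ≤ 1 := by linarith [hc.2]
      · show γ (c * 0) = ξ₀
        rw [mul_zero, hγ0]
      · show γ (c * 1) = γ c
        rw [mul_one]
    have hcongr : ∀ s ∈ Set.uIcc (0:ℝ) 1, Real.sqrt (W (σ s)) * ‖deriv σ s‖
        = c * (Real.sqrt (W (γ (c * s))) * ‖deriv γ (c * s)‖) := by
      intro s _
      rw [hσdef]
      rw [deriv_comp_mul γ c s, norm_smul, Real.norm_eq_abs, abs_of_pos hcpos]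
      ring
    have henergy : curveEnergy W σ = ∫ t in (0:ℝ)..c, Real.sqrt (W (γ t)) * ‖deriv γ t‖ := by
      rw [curveEnergy, intervalIntegral.integral_congr hcongr,
        intervalIntegral.integral_const_mul]
      have hcomp := intervalIntegral.smul_integral_comp_mul_left
        (f := fun u => Real.sqrt (W (γ u)) * ‖deriv γ u‖) (a := (0:ℝ)) (b := 1) c
      rw [mul_zero, mul_one] at hcomp
      rw [← hcomp, smul_eq_mul]
    calc geoDist W ξ₀ (γ c) ≤ curveEnergy W σ := geoDist_le_energy hW0 hcurve
      _ = _ := henergy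

end Partial

section Lip
variable {W : E3 → ℝ}

lemma geoDist_lipschitzOnWith (hWc : Continuous W) (hW0 : ∀ u, 0 ≤ W u) {ξ₀ : E3}
    (hξ₀ : ξ₀ ∈ Orthant) {s : Set E3} (hconv : Convex ℝ s) (hsub : s ⊆ Orthant) {M : ℝ}
    (hM : ∀ u ∈ s, Real.sqrt (W u) ≤ M) :
    LipschitzOnWith M.toNNReal (fun ξ' => geoDist W ξ₀ ξ') s := by
  rw [lipschitzOnWith_iff_dist_le_mul]
  intro η hη ζ hζ
  rw [Real.dist_eq, dist_eq_norm]
  have key : ∀ x ∈ s, ∀ y ∈ s, geoDist W ξ₀ x - geoDist W ξ₀ y ≤ M.toNNReal * ‖η - ζ‖ →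
      True := fun _ _ _ _ _ => trivial
  have bound : ∀ x ∈ s, ∀ y ∈ s,
      geoDist W ξ₀ x ≤ geoDist W ξ₀ y + M * ‖x - y‖ := by
    intro x hx y hy
    apply geoDist_le_segment_bound hWc hW0 hξ₀ (hsub hy) (hsub hx)
    intro u hu
    exact hM u (hconv.segment_subset hy hx hu)
  have hMle : M ≤ (M.toNNReal : ℝ) := Real.le_coe_toNNReal M
  have h1 := bound η hη ζ hζ
  have h2 := bound ζ hζ η hη
  rw [abs_sub_le_iff]
  constructor
  · calc geoDist W ξ₀ η - geoDist W ξ₀ ζ ≤ M * ‖η - ζ‖ := by linarith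
      _ ≤ (M.toNNReal : ℝ) * ‖η - ζ‖ := mul_le_mul_of_nonneg_right hMle (norm_nonneg _)
  · calc geoDist W ξ₀ ζ - geoDist W ξ₀ η ≤ M * ‖ζ - η‖ := by linarith
      _ = M * ‖η - ζ‖ := by rw [norm_sub_rev]
      _ ≤ (M.toNNReal : ℝ) * ‖η - ζ‖ := mul_le_mul_of_nonneg_right hMle (norm_nonneg _)

lemma isOpen_posOrthant : IsOpen {u : E3 | ∀ i, 0 < u i} := by
  have : {u : E3 | ∀ i, 0 < u i} = ⋂ i, (fun u : E3 => u i) ⁻¹' Set.Ioi 0 := by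
    ext u; simp
  rw [this]
  exact isOpen_iInter_of_finite fun i =>
    (isOpen_Ioi).preimage (EuclideanSpace.proj i).continuous

lemma posOrthant_subset : {u : E3 | ∀ i, 0 < u i} ⊆ Orthant := fun u hu i => (hu i).le

end Lip

section Eikonal
variable {W : E3 → ℝ}

/-- At a point of differentiability inside the orthant (away from the base point),
the eikonal equation holds. -/
lemma eikonal_at (hWc : Continuous W) (hW0 : ∀ u, 0 ≤ W u) {ξ₀ : E3} (hξ₀ : ξ₀ ∈ Orthant)
    {ξ : E3} {r : ℝ} (hr : 0 < r) (hball : Metric.ball ξ r ⊆ Orthant) (hne : ξ ≠ ξ₀)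
    (hdiff : DifferentiableAt ℝ (fun ξ' => geoDist W ξ₀ ξ') ξ) :
    ‖fderiv ℝ (fun ξ' => geoDist W ξ₀ ξ') ξ‖ = Real.sqrt (W ξ) := by
  set φ : E3 → ℝ := fun ξ' => geoDist W ξ₀ ξ' with hφdef
  set F := fderiv ℝ φ ξ with hFdef
  have hsqc : Continuous (fun u => Real.sqrt (W u)) := Real.continuous_sqrt.comp hWc
  have hξmem : ξ ∈ Orthant := hball (Metric.mem_ball_self hr)
  -- upper bound
  have hub : ‖F‖ ≤ Real.sqrt (W ξ) := by
    refine le_of_forall_pos_le_add fun δ hδ => ?_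
    have hcont : ∀ᶠ u in 𝓝 ξ, Real.sqrt (W u) < Real.sqrt (W ξ) + δ :=
      (hsqc.continuousAt).eventually_lt_const (lt_add_of_pos_right _ hδ)
    obtain ⟨r1, hr1pos, hr1⟩ := Metric.eventually_nhds_iff_ball.1 hcont
    set r2 := min r1 r with hr2def
    have hr2pos : 0 < r2 := lt_min hr1pos hr
    have hlip : LipschitzOnWith (Real.sqrt (W ξ) + δ).toNNReal φ (Metric.ball ξ r2) := by
      apply geoDist_lipschitzOnWith hWc hW0 hξ₀ (convex_ball ξ r2)
      · exact fun u hu => hball (Metric.ball_subset_ball (min_le_right r1 r) hu)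
      · intro u hu
        exact (hr1 u (Metric.ball_subset_ball (min_le_left r1 r) hu)).le
    have := norm_fderiv_le_of_lipschitzOn ℝ (Metric.ball_mem_nhds ξ hr2pos) hlip
    calc ‖F‖ ≤ ((Real.sqrt (W ξ) + δ).toNNReal : ℝ) := this
      _ = Real.sqrt (W ξ) + δ := by
          rw [Real.coe_toNNReal _ (by positivity)]
  -- lower bound
  have hlb : Real.sqrt (W ξ) ≤ ‖F‖ := by
    refine le_of_forall_pos_le_add fun ε hε => ?_
    set δ := ε / 3 with hδdef
    have hδ : 0 < δ := by positivity
    by_cases htriv : Real.sqrt (W ξ) - δ ≤ 0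
    · have : Real.sqrt (W ξ) ≤ δ := by linarith
      calc Real.sqrt (W ξ) ≤ δ := this
        _ ≤ ‖F‖ + ε := by
            have : (0:ℝ) ≤ ‖F‖ := norm_nonneg _
            have : δ ≤ ε := by rw [hδdef]; linarith
            linarith [norm_nonneg F]
    push_neg at htriv
    set m := Real.sqrt (W ξ) - δ with hmdef
    -- choose radius where √W ≥ √W ξ - δ
    have hcont : ∀ᶠ u in 𝓝 ξ, m < Real.sqrt (W u) :=
      (hsqc.continuousAt).eventually_const_lt (by rw [hmdef]; linarith)
    obtain ⟨rA, hrApos, hrA⟩ := Metric.eventually_nhds_iff_ball.1 hcont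
    -- little-o control from differentiability
    have hlito : ∀ᶠ u in 𝓝 ξ, ‖φ u - φ ξ - F (u - ξ)‖ ≤ δ * ‖u - ξ‖ :=
      hdiff.hasFDerivAt.isLittleO.def hδ
    obtain ⟨rB, hrBpos, hrB⟩ := Metric.eventually_nhds_iff_ball.1 hlito
    have hd0 : 0 < ‖ξ - ξ₀‖ := by
      rw [norm_pos_iff, sub_ne_zero]
      exact hne
    set r' := (min (min rA rB) (min r ‖ξ - ξ₀‖)) / 2 with hr'def
    have hr'pos : 0 < r' := by
      apply div_pos _ two_pos
      exact lt_min (lt_min hrApos hrBpos) (lt_min hr hd0)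
    have hr'A : r' < rA := by
      have h1 : r' ≤ min (min rA rB) (min r ‖ξ - ξ₀‖) / 2 := le_refl _
      have h2 : min (min rA rB) (min r ‖ξ - ξ₀‖) ≤ rA :=
        le_trans (min_le_left _ _) (min_le_left _ _)
      linarith [hr'pos]
    have hr'B : r' < rB := by
      have h2 : min (min rA rB) (min r ‖ξ - ξ₀‖) ≤ rB :=
        le_trans (min_le_left _ _) (min_le_right _ _)
      linarith [hr'pos]
    have hr'r : r' < r := by
      have h2 : min (min rA rB) (min r ‖ξ - ξ₀‖) ≤ r :=
        le_trans (min_le_right _ _) (min_le_left _ _)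
      linarith [hr'pos]
    have hr'd : r' < ‖ξ - ξ₀‖ := by
      have h2 : min (min rA rB) (min r ‖ξ - ξ₀‖) ≤ ‖ξ - ξ₀‖ :=
        le_trans (min_le_right _ _) (min_le_right _ _)
      linarith [hr'pos]
    -- near-optimal curve
    have hφlt : geoDist W ξ₀ ξ < φ ξ + δ * r' := by
      rw [hφdef]
      simp only
      nlinarith [hr'pos, hδ]
    obtain ⟨γ, hγ, hγE⟩ := exists_curve_lt hW0 hξ₀ hξmem hφlt
    obtain ⟨⟨K, hK⟩, horth, hγ0, hγ1⟩ := hγ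
    -- last time the curve is at distance ≥ r' from ξ
    set S := {t : ℝ | t ∈ Set.Icc (0:ℝ) 1 ∧ r' ≤ ‖γ t - ξ‖} with hSdef
    have hS0 : (0:ℝ) ∈ S := by
      constructor
      · exact ⟨le_refl 0, zero_le_one⟩
      · rw [hγ0, norm_sub_rev]
        exact hr'd.le
    have hSclosed : IsClosed S := by
      have : S = Set.Icc (0:ℝ) 1 ∩ (fun t => ‖γ t - ξ‖) ⁻¹' Set.Ici r' := by
        ext t; simp [hSdef, Set.mem_preimage]
      rw [this]
      exact isClosed_Icc.inter (IsClosed.preimage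
        ((hK.continuous.sub continuous_const).norm) isClosed_Ici)
    have hScompact : IsCompact S := (isCompact_Icc).of_isClosed_subset hSclosed fun t ht => ht.1
    set c := sSup S with hcdef
    have hcmem : c ∈ S := hScompact.sSup_mem ⟨0, hS0⟩
    have hc01 : c ∈ Set.Icc (0:ℝ) 1 := hcmem.1
    have hc1 : c < 1 := by
      rcases lt_or_eq_of_le hc01.2 with h | h
      · exact h
      · exfalso
        have := hcmem.2
        rw [h, hγ1, sub_self, norm_zero] at this
        linarith
    have hafter : ∀ t, c < t → t ≤ 1 → ‖γ t - ξ‖ < r' := by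
      intro t hct ht1
      by_contra hcon
      push_neg at hcon
      have htS : t ∈ S := ⟨⟨(hc01.1).trans hct.le, ht1⟩, hcon⟩
      exact absurd (le_csSup hScompact.bddAbove htS) (not_le.2 hct)
    have hceq : ‖γ c - ξ‖ = r' := by
      refine le_antisymm ?_ hcmem.2
      by_contra hcon
      push_neg at hcon
      have hev : ∀ᶠ t in 𝓝 c, r' < ‖γ t - ξ‖ :=
        (((hK.continuous.sub continuous_const).norm).continuousAt).eventually_const_lt hcon
      obtain ⟨ν, hνpos, hν⟩ := Metric.eventually_nhds_iff.1 hev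
      set t := min (c + ν/2) ((c+1)/2) with htdef
      have htc : c < t := by
        apply lt_min
        · linarith
        · linarith
      have ht1 : t ≤ 1 := by
        apply le_trans (min_le_right _ _)
        linarith
      have htd : dist t c < ν := by
        rw [Real.dist_eq, abs_of_pos (by linarith)]
        have : t ≤ c + ν/2 := min_le_left _ _
        linarith
      exact absurd (hν htd) (not_lt.2 (hafter t htc ht1).le)
    -- the tail of the curve stays in the closed ball of radius r'
    have htail : ∀ t, c ≤ t → t ≤ 1 → ‖γ t - ξ‖ ≤ r' := by
      intro t hct ht1
      rcases eq_or_lt_of_le hct with rfl | h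
      · exact hceq.le
      · exact (hafter t h ht1).le
    -- energy split
    have hint1 := energy_integrand_integrable hWc hK 0 c
    have hint2 := energy_integrand_integrable hWc hK c 1
    have hsplit : (∫ t in (0:ℝ)..c, Real.sqrt (W (γ t)) * ‖deriv γ t‖)
        + (∫ t in c..1, Real.sqrt (W (γ t)) * ‖deriv γ t‖) = curveEnergy W γ :=
      intervalIntegral.integral_add_adjacent_intervals hint1 hint2
    -- head: bound on φ (γ c)
    have hhead : φ (γ c) ≤ ∫ t in (0:ℝ)..c, Real.sqrt (W (γ t)) * ‖deriv γ t‖ :=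
      geoDist_le_partial hWc hW0 hK horth hγ0 hc01
    -- tail: lower bound
    have htailE : m * r' ≤ ∫ t in c..1, Real.sqrt (W (γ t)) * ‖deriv γ t‖ := by
      have hintd : IntervalIntegrable (fun t => ‖deriv γ t‖) volume c 1 :=
        intervalIntegrable_of_bdd (measurable_deriv γ).norm.aestronglyMeasurable
          (fun t => by
            simpa [abs_of_nonneg (norm_nonneg (deriv γ t))] using norm_deriv_le_of_lip hK t) c 1
      have hchord : ‖γ 1 - γ c‖ ≤ ∫ t in c..1, ‖deriv γ t‖ := chord_le hK hc01.2
      have hnorm : r' ≤ ‖γ 1 - γ c‖ := by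
        have : γ 1 - γ c = (ξ - γ c) := by rw [hγ1]
        rw [this, norm_sub_rev, hceq]
      have hstep : m * ∫ t in c..1, ‖deriv γ t‖
          ≤ ∫ t in c..1, Real.sqrt (W (γ t)) * ‖deriv γ t‖ := by
        rw [← intervalIntegral.integral_const_mul]
        apply intervalIntegral.integral_mono_on hc01.2 (hintd.const_mul m) hint2
        intro t ht
        have hmem : γ t ∈ Metric.ball ξ rA := by
          rw [Metric.mem_ball, dist_eq_norm]
          calc ‖γ t - ξ‖ ≤ r' := htail t ht.1 ht.2
            _ < rA := hr'A
        exact mul_le_mul_of_nonneg_right (hrA _ hmem).le (norm_nonneg _)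
      calc m * r' ≤ m * ‖γ 1 - γ c‖ := mul_le_mul_of_nonneg_left hnorm htriv.le
        _ ≤ m * ∫ t in c..1, ‖deriv γ t‖ := mul_le_mul_of_nonneg_left hchord htriv.le
        _ ≤ _ := hstep
    -- differentiability estimate at η = γ c
    have hγcball : γ c ∈ Metric.ball ξ rB := by
      rw [Metric.mem_ball, dist_eq_norm, hceq]
      exact hr'B
    have hdiffest : ‖φ (γ c) - φ ξ - F (γ c - ξ)‖ ≤ δ * ‖γ c - ξ‖ := hrB _ hγcball
    have hFbound : -(‖F‖ * r') ≤ F (γ c - ξ) := by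
      have h1 : ‖F (γ c - ξ)‖ ≤ ‖F‖ * ‖γ c - ξ‖ := F.le_opNorm _
      rw [hceq] at h1
      have := abs_le.1 (by rwa [Real.norm_eq_abs] at h1)
      linarith [this.1]
    have hφη_lb : φ ξ - ‖F‖ * r' - δ * r' ≤ φ (γ c) := by
      rw [Real.norm_eq_abs] at hdiffest
      have h2 := (abs_le.1 hdiffest).1
      rw [hceq] at h2
      linarith [hFbound]
    have hφη_ub : φ (γ c) ≤ φ ξ + δ * r' - m * r' := by
      have h3 : (∫ t in (0:ℝ)..c, Real.sqrt (W (γ t)) * ‖deriv γ t‖)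
          = curveEnergy W γ - ∫ t in c..1, Real.sqrt (W (γ t)) * ‖deriv γ t‖ := by
        linarith [hsplit]
      calc φ (γ c) ≤ ∫ t in (0:ℝ)..c, Real.sqrt (W (γ t)) * ‖deriv γ t‖ := hhead
        _ = curveEnergy W γ - ∫ t in c..1, Real.sqrt (W (γ t)) * ‖deriv γ t‖ := h3
        _ ≤ (φ ξ + δ * r') - m * r' := by
            have := hγE
            linarith [htailE]
    have hfinal : Real.sqrt (W ξ) * r' ≤ (‖F‖ + 3 * δ) * r' := by
      have : φ ξ - ‖F‖ * r' - δ * r' ≤ φ ξ + δ * r' - m * r' := le_trans hφη_lb hφη_ub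
      rw [hmdef] at this
      nlinarith
    have := le_of_mul_le_mul_right (by linarith [hfinal] : Real.sqrt (W ξ) * r' ≤ (‖F‖ + 3*δ) * r') hr'pos
    calc Real.sqrt (W ξ) ≤ ‖F‖ + 3 * δ := this
      _ = ‖F‖ + ε := by rw [hδdef]; ring
  exact le_antisymm hub hlb

end Eikonal

section Rademacher
variable {W : E3 → ℝ}

lemma ae_diff_geoDist (hWc : Continuous W) (hW0 : ∀ u, 0 ≤ W u) {ξ₀ : E3}
    (hξ₀ : ξ₀ ∈ Orthant) :
    ∀ᵐ ξ : E3, ξ ∈ {u : E3 | ∀ i, 0 < u i} →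
      DifferentiableAt ℝ (fun ξ' => geoDist W ξ₀ ξ') ξ := by
  set φ : E3 → ℝ := fun ξ' => geoDist W ξ₀ ξ' with hφdef
  set P := {u : E3 | ∀ i, 0 < u i} with hPdef
  set D := {ξ : E3 | ξ ∈ P ∧ ¬ DifferentiableAt ℝ φ ξ} with hDdef
  have hD : volume D = 0 := by
    apply measure_null_of_locally_null
    intro x hx
    obtain ⟨ρ, hρpos, hρ⟩ := Metric.isOpen_iff.1 isOpen_posOrthant x hx.1
    set r := ρ / 2 with hrdef
    have hrpos : 0 < r := by positivity
    have hball_orth : Metric.ball x r ⊆ Orthant := by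
      refine subset_trans (Metric.ball_subset_ball (by linarith)) (hρ.trans posOrthant_subset)
    obtain ⟨M, hM⟩ := (isCompact_closedBall x r).exists_bound_of_continuousOn
      ((Real.continuous_sqrt.comp hWc).continuousOn)
    have hlip : LipschitzOnWith M.toNNReal φ (Metric.ball x r) := by
      apply geoDist_lipschitzOnWith hWc hW0 hξ₀ (convex_ball x r) hball_orth
      intro u hu
      have := hM u (Metric.ball_subset_closedBall hu)
      simp only [Function.comp_apply] at this
      rwa [Real.norm_eq_abs, abs_of_nonneg (Real.sqrt_nonneg _)] at this
    obtain ⟨g, hgL, hgeq⟩ := hlip.extend_real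
    refine ⟨D ∩ Metric.ball x r, inter_mem_nhdsWithin _ (Metric.ball_mem_nhds x hrpos), ?_⟩
    refine measure_mono_null (t := {ξ : E3 | ¬ DifferentiableAt ℝ g ξ}) ?_ ?_
    · rintro ξ ⟨hξD, hξball⟩
      intro hgd
      apply hξD.2
      have hev : φ =ᶠ[nhds ξ] g :=
        Filter.eventuallyEq_of_mem (Metric.isOpen_ball.mem_nhds hξball) hgeq
      exact hev.differentiableAt_iff.2 hgd
    · have := hgL.ae_differentiableAt (μ := volume)
      rwa [MeasureTheory.ae_iff] at this
  rw [MeasureTheory.ae_iff]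
  have heq : {ξ : E3 | ¬ (ξ ∈ P → DifferentiableAt ℝ φ ξ)} = D := by
    ext ξ
    simp [hDdef, Classical.not_imp]
  rw [heq]
  exact hD

end Rademacher


/-- The geodesic distance function `φ = g(ξ₀, ·)` is locally Lipschitz on the orthant and
satisfies the eikonal equation `|∇φ| = √W` a.e. on the open positive orthant. -/
theorem geoDist_locallyLipschitz_eikonal (a b : E3) (W : E3 → ℝ) (hW : DoubleWell a b W)
    (ξ₀ : E3) (hξ₀ : ξ₀ ∈ Orthant) :
    (∀ ξ ∈ Orthant, ∃ ε > (0 : ℝ), ∃ K : NNReal,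
      LipschitzOnWith K (fun ξ' => geoDist W ξ₀ ξ') (Metric.ball ξ ε ∩ Orthant)) ∧
    (∀ᵐ ξ ∂(volume.restrict {u : E3 | ∀ i, 0 < u i}),
      DifferentiableAt ℝ (fun ξ' => geoDist W ξ₀ ξ') ξ ∧
        ‖fderiv ℝ (fun ξ' => geoDist W ξ₀ ξ') ξ‖ = Real.sqrt (W ξ)) := by
  have hWc : Continuous W := hW.smooth.continuous
  have hW0 := hW.nonneg
  constructor
  · intro ξ hξ
    refine ⟨1, one_pos, ?_⟩
    obtain ⟨M, hM⟩ := (isCompact_closedBall ξ 1).exists_bound_of_continuousOn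
      ((Real.continuous_sqrt.comp hWc).continuousOn)
    refine ⟨M.toNNReal, ?_⟩
    apply geoDist_lipschitzOnWith hWc hW0 hξ₀ ((convex_ball ξ 1).inter orthant_convex)
      Set.inter_subset_right
    intro u hu
    have := hM u (Metric.ball_subset_closedBall hu.1)
    simp only [Function.comp_apply] at this
    rwa [Real.norm_eq_abs, abs_of_nonneg (Real.sqrt_nonneg _)] at this
  · have hPmeas : MeasurableSet {u : E3 | ∀ i, 0 < u i} := isOpen_posOrthant.measurableSet
    rw [MeasureTheory.ae_restrict_iff' hPmeas]
    have h1 := ae_diff_geoDist hWc hW0 hξ₀ (W := W)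
    have h2 : ∀ᵐ ξ : E3, ξ ≠ ξ₀ := by
      rw [MeasureTheory.ae_iff]
      have heq : {ξ : E3 | ¬ ξ ≠ ξ₀} = {ξ₀} := by ext; simp
      rw [heq]
      exact measure_singleton ξ₀
    filter_upwards [h1, h2] with ξ hdiff hne hmem
    have hd := hdiff hmem
    refine ⟨hd, ?_⟩
    obtain ⟨ρ, hρpos, hρ⟩ := Metric.isOpen_iff.1 isOpen_posOrthant ξ hmem
    exact eikonal_at hWc hW0 hξ₀ hρpos (hρ.trans posOrthant_subset) hne hd
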